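/- Let n ≥ 1, let A ⊆ ℕ^n be a finite nonempty set, let P = convexHull(A) + ℝ_{≥0}^n ⊆ ℝ^n be the Newton polyhedron, and for v ∈ ℝ^n with v_i ≥ 0 for all i set ν(v) = min_{u ∈ A} ⟨u, v⟩. Suppose v ∈ ℤ^n with v ≠ 0 and v_i ≥ 0 for all i is such that the face F_v = { u ∈ P : ⟨u, v⟩ = ν(v) } has affine span of dimension n − 1 (i.e., F_v is a facet of P). If there exists an index i such that F_v ⊆ { u ∈ ℝ^n : u_i = 0 }, then v is a positive real multiple of the standard basis vector e_i and ν(v) = 0; in particular, if moreover the greatest common divisor of the coordinates of v is 1, then v = e_i. -/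
import Mathlib

open Pointwise

private lemma ker_finrank_aux (n : ℕ) (φ : (Fin n → ℝ) →ₗ[ℝ] ℝ) (hφ : φ ≠ 0) :
    Module.finrank ℝ (LinearMap.ker φ) = n - 1 := by
  obtain ⟨x, hx⟩ : ∃ x, φ x ≠ 0 := by
    by_contra h
    push_neg at h
    exact hφ (LinearMap.ext fun x => h x)
  have hsurj : Function.Surjective φ := fun c => ⟨(c / φ x) • x, by
    simp [map_smul, div_mul_cancel₀, hx]⟩
  have hr : LinearMap.range φ = ⊤ := LinearMap.range_eq_top.2 hsurj
  have h1 : Module.finrank ℝ (LinearMap.range φ) = 1 := by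
    rw [hr]; simp [Module.finrank_self]
  have h2 := LinearMap.finrank_range_add_finrank_ker φ
  rw [h1] at h2
  have hn : Module.finrank ℝ (Fin n → ℝ) = n := by simp
  omega

/-- A facet of the Newton polyhedron contained in a coordinate hyperplane
`{u_i = 0}` is cut out by a positive multiple of the standard basis vector
`e_i`, and the corresponding value of the support function is `0`; if moreover
the normal vector is primitive, it equals `e_i`. -/
theorem facet_in_coordinate_hyperplane
    (n : ℕ) (hn : 1 ≤ n) (A : Finset (Fin n → ℕ)) (hA : A.Nonempty)
    (P : Set (Fin n → ℝ))
    (hP : P = convexHull ℝ ((fun (u : Fin n → ℕ) (i : Fin n) => (u i : ℝ)) '' ↑A)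
      + {x : Fin n → ℝ | ∀ i, 0 ≤ x i})
    (v : Fin n → ℤ) (hv0 : v ≠ 0) (hvnn : ∀ i, 0 ≤ v i)
    (F : Set (Fin n → ℝ))
    (hF : F = {u ∈ P | ∑ i, u i * (v i : ℝ) =
      ((A.inf' hA fun u => ∑ i, (u i : ℤ) * v i : ℤ) : ℝ)})
    (hfacet : Module.finrank ℝ (affineSpan ℝ F).direction = n - 1)
    (i : Fin n) (hsub : F ⊆ {u : Fin n → ℝ | u i = 0}) :
    (∃ t : ℝ, 0 < t ∧ (fun j => (v j : ℝ)) = t • (Pi.single i 1 : Fin n → ℝ)) ∧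
    (A.inf' hA fun u => ∑ j, (u j : ℤ) * v j) = 0 ∧
    (Finset.univ.gcd v = 1 → v = Pi.single i 1) := by
  set ν : ℤ := A.inf' hA fun u => ∑ j, (u j : ℤ) * v j with hν
  -- a point of F
  obtain ⟨u₀, hu₀A, hu₀⟩ := Finset.exists_mem_eq_inf' hA (fun u => ∑ j, (u j : ℤ) * v j)
  set x₀ : Fin n → ℝ := fun j => (u₀ j : ℝ) with hx₀
  have hx₀P : x₀ ∈ P := by
    rw [hP]
    have h1 : x₀ ∈ convexHull ℝ ((fun (u : Fin n → ℕ) (i : Fin n) => (u i : ℝ)) '' ↑A) :=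
      subset_convexHull ℝ _ ⟨u₀, hu₀A, rfl⟩
    have h2 : (0 : Fin n → ℝ) ∈ {x : Fin n → ℝ | ∀ i, 0 ≤ x i} := fun _ => le_refl 0
    simpa using Set.add_mem_add h1 h2
  have hx₀sum : ∑ j, x₀ j * (v j : ℝ) = (ν : ℝ) := by
    rw [hν, hu₀]; push_cast; rfl
  have hx₀F : x₀ ∈ F := by rw [hF]; exact ⟨hx₀P, hx₀sum⟩
  -- the two linear functionals
  set φ : (Fin n → ℝ) →ₗ[ℝ] ℝ :=
    { toFun := fun x => ∑ j, x j * (v j : ℝ)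
      map_add' := by intro x y; simp [add_mul, Finset.sum_add_distrib]
      map_smul' := by intro c x; simp [Finset.mul_sum, mul_assoc] } with hφdef
  set ψ : (Fin n → ℝ) →ₗ[ℝ] ℝ := LinearMap.proj i with hψdef
  have hφx : ∀ x, φ x = ∑ j, x j * (v j : ℝ) := fun x => rfl
  have hψx : ∀ x, ψ x = x i := fun x => rfl
  -- φ and ψ are nonzero
  obtain ⟨k, hk⟩ : ∃ k, v k ≠ 0 := by
    by_contra h; push_neg at h; exact hv0 (funext h)
  have hφ0 : φ ≠ 0 := by
    intro h
    have := congrFun (congrArg DFunLike.coe h) (Pi.single k 1)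
    simp only [hφdef, LinearMap.coe_mk, AddHom.coe_mk, LinearMap.zero_apply] at this
    rw [Finset.sum_eq_single k (by intro b _ hb; simp [Pi.single_apply, hb]) (by simp)] at this
    simp at this
    exact hk (by exact_mod_cast this)
  have hψ0 : ψ ≠ 0 := by
    intro h
    have := congrFun (congrArg DFunLike.coe h) (Pi.single i 1)
    simp [hψx] at this
  -- direction of the affine span is contained in both kernels
  have key : ∀ (χ : (Fin n → ℝ) →ₗ[ℝ] ℝ), χ ≠ 0 → (∀ x ∈ F, χ x = χ x₀) →
      (affineSpan ℝ F).direction = LinearMap.ker χ := by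
    intro χ hχ hFχ
    have hle : affineSpan ℝ F ≤ AffineSubspace.mk' x₀ (LinearMap.ker χ) := by
      rw [affineSpan_le]
      intro x hx
      rw [AffineSubspace.mem_coe, AffineSubspace.mem_mk']
      simp only [LinearMap.mem_ker, vsub_eq_sub, map_sub, hFχ x hx, sub_self]
    have hdle : (affineSpan ℝ F).direction ≤ LinearMap.ker χ := by
      have := AffineSubspace.direction_le hle
      rwa [AffineSubspace.direction_mk'] at this
    exact Submodule.eq_of_le_of_finrank_le hdle
      (by rw [ker_finrank_aux n χ hχ, hfacet])
  have hFφ : ∀ x ∈ F, φ x = φ x₀ := by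
    intro x hx
    rw [hF] at hx
    rw [hφx, hφx, hx.2, hx₀sum]
  have hFψ : ∀ x ∈ F, ψ x = ψ x₀ := by
    intro x hx
    rw [hψx, hψx, hsub hx, hsub hx₀F]
  have hkers : LinearMap.ker φ = LinearMap.ker ψ := by
    rw [← key φ hφ0 hFφ, key ψ hψ0 hFψ]
  -- coordinates of v off i vanish
  have hvj : ∀ j, j ≠ i → v j = 0 := by
    intro j hj
    have hmem : (Pi.single j 1 : Fin n → ℝ) ∈ LinearMap.ker ψ := by
      simp [hψx, LinearMap.mem_ker, Pi.single_apply, hj]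
    rw [← hkers, LinearMap.mem_ker, hφx] at hmem
    rw [Finset.sum_eq_single j (by intro b _ hb; simp [Pi.single_apply, hb]) (by simp)] at hmem
    simp at hmem
    exact_mod_cast hmem
  -- x₀ i = 0
  have hx₀i : x₀ i = 0 := hsub hx₀F
  -- ν = 0
  have hν0 : ν = 0 := by
    have : (ν : ℝ) = 0 := by
      rw [← hx₀sum, Finset.sum_eq_single i
        (by intro b _ hb; simp [hvj b hb]) (by simp), hx₀i, zero_mul]
    exact_mod_cast this
  have hvi : 0 < v i := by
    rcases lt_or_eq_of_le (hvnn i) with h | h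
    · exact h
    · exfalso
      apply hv0
      funext j
      rcases eq_or_ne j i with rfl | hj
      · exact h.symm
      · exact hvj j hj
  refine ⟨⟨(v i : ℝ), by exact_mod_cast hvi, ?_⟩, hν0, ?_⟩
  · funext j
    rcases eq_or_ne j i with rfl | hj
    · simp
    · simp [hvj j hj, Pi.single_apply, hj]
  · intro hgcd
    have hdvd : v i ∣ Finset.univ.gcd v := by
      apply Finset.dvd_gcd
      intro j _
      rcases eq_or_ne j i with rfl | hj
      · exact dvd_rfl
      · simp [hvj j hj]
    rw [hgcd] at hdvd
    have : v i = 1 := Int.eq_one_of_dvd_one (le_of_lt hvi) hdvd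
    funext j
    rcases eq_or_ne j i with rfl | hj
    · simp [this]
    · simp [hvj j hj, Pi.single_apply, hj]
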